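/- Let G be an amenable Hausdorff topological group. Then every bounded action of G by affine homeomorphisms on a bounded convex subset of a locally convex topological vector space has approximate fixed points: there is a net (x_ι) in C with x_ι − g x_ι → 0 for every g ∈ G. -/

import Mathlib

/-- Bounded right-uniformly continuous real functions on a topological group. -/
def RUCb (G : Type*) [Group G] [TopologicalSpace G] : Set (G → ℝ) :=
  {f | (∃ C, ∀ x, |f x| ≤ C) ∧
    ∀ ε > (0:ℝ), ∃ U ∈ nhds (1 : G), ∀ x y : G, x * y⁻¹ ∈ U → |f x - f y| ≤ ε}

/-- A mean on a set `D` of real functions on `X`: positive, normalized, linear on `D`. -/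
def IsMeanOn (X : Type*) (D : Set (X → ℝ)) (m : (X → ℝ) → ℝ) : Prop :=
  m (fun _ => 1) = 1 ∧
  (∀ f ∈ D, ∀ g ∈ D, m (f + g) = m f + m g) ∧
  (∀ (c : ℝ), ∀ f ∈ D, m (c • f) = c * m f) ∧
  (∀ f ∈ D, (∀ x, 0 ≤ f x) → 0 ≤ m f)

/-- A topological group is amenable if `RUC_b(G)` admits a left-invariant mean. -/
def TopAmenable (G : Type*) [Group G] [TopologicalSpace G] : Prop :=
  ∃ m : (G → ℝ) → ℝ, IsMeanOn G (RUCb G) m ∧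
    ∀ f ∈ RUCb G, ∀ g : G, m (fun x => f (g * x)) = m f

section Aux

variable {G : Type*} [Group G] [TopologicalSpace G]

lemma rucb_const (c : ℝ) : (fun _ : G => c) ∈ RUCb G :=
  ⟨⟨|c|, fun _ => le_refl _⟩, fun ε hε =>
    ⟨Set.univ, Filter.univ_mem, fun _ _ _ => by simpa using hε.le⟩⟩

lemma rucb_add {f g : G → ℝ} (hf : f ∈ RUCb G) (hg : g ∈ RUCb G) : f + g ∈ RUCb G := by
  obtain ⟨⟨Cf, hCf⟩, hf2⟩ := hf
  obtain ⟨⟨Cg, hCg⟩, hg2⟩ := hg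
  refine ⟨⟨Cf + Cg, fun x => ?_⟩, fun ε hε => ?_⟩
  · calc |(f + g) x| = |f x + g x| := by simp
    _ ≤ |f x| + |g x| := abs_add_le _ _
    _ ≤ Cf + Cg := add_le_add (hCf x) (hCg x)
  · obtain ⟨U, hU, hU2⟩ := hf2 (ε/2) (by linarith)
    obtain ⟨V, hV, hV2⟩ := hg2 (ε/2) (by linarith)
    refine ⟨U ∩ V, Filter.inter_mem hU hV, fun x y hxy => ?_⟩
    have h1 := hU2 x y hxy.1
    have h2 := hV2 x y hxy.2
    have he : (f+g) x - (f+g) y = (f x - f y) + (g x - g y) := by simp; ring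
    rw [he]
    calc |(f x - f y) + (g x - g y)| ≤ |f x - f y| + |g x - g y| := abs_add_le _ _
    _ ≤ ε := by linarith

lemma rucb_smul (c : ℝ) {f : G → ℝ} (hf : f ∈ RUCb G) : c • f ∈ RUCb G := by
  obtain ⟨⟨Cf, hCf⟩, hf2⟩ := hf
  refine ⟨⟨|c| * Cf, fun x => ?_⟩, fun ε hε => ?_⟩
  · simp only [Pi.smul_apply, smul_eq_mul, abs_mul]
    exact mul_le_mul_of_nonneg_left (hCf x) (abs_nonneg c)
  · obtain ⟨U, hU, hU2⟩ := hf2 (ε / (|c| + 1)) (by positivity)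
    refine ⟨U, hU, fun x y hxy => ?_⟩
    have h1 := hU2 x y hxy
    have h2 : |c| * |f x - f y| ≤ |c| * (ε / (|c| + 1)) :=
      mul_le_mul_of_nonneg_left h1 (abs_nonneg c)
    have h3 : |c| * (ε / (|c| + 1)) ≤ ε := by
      rw [mul_comm, div_mul_eq_mul_div, div_le_iff₀ (by positivity : (0:ℝ) < |c| + 1)]
      nlinarith [abs_nonneg c, hε.le]
    have he : (c • f) x - (c • f) y = c * (f x - f y) := by
      simp only [Pi.smul_apply, smul_eq_mul]; ring
    rw [he, abs_mul]
    linarith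

lemma rucb_translate [IsTopologicalGroup G] {f : G → ℝ} (hf : f ∈ RUCb G) (g : G) :
    (fun a => f (g * a)) ∈ RUCb G := by
  obtain ⟨⟨Cf, hCf⟩, hf2⟩ := hf
  refine ⟨⟨Cf, fun x => hCf _⟩, fun ε hε => ?_⟩
  obtain ⟨U, hU, hU2⟩ := hf2 ε hε
  have hc : Continuous fun z : G => g * z * g⁻¹ := by continuity
  have h1 : (fun z : G => g * z * g⁻¹) ⁻¹' U ∈ nhds (1 : G) := by
    apply hc.continuousAt.preimage_mem_nhds
    simpa using hU
  refine ⟨_, h1, fun x y hxy => ?_⟩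
  have hmem : (g * x) * (g * y)⁻¹ ∈ U := by
    have : g * (x * y⁻¹) * g⁻¹ ∈ U := hxy
    simpa [mul_inv_rev, mul_assoc] using this
  exact hU2 _ _ hmem

lemma mean_zero {m : (G → ℝ) → ℝ} (hm : IsMeanOn G (RUCb G) m) : m 0 = 0 := by
  have h := hm.2.2.1 0 (fun _ => 1) (rucb_const 1)
  simpa using h

lemma mean_sum {m : (G → ℝ) → ℝ} (hm : IsMeanOn G (RUCb G) m) {ι : Type*} (s : Finset ι)
    (h : ι → G → ℝ) (hh : ∀ i ∈ s, h i ∈ RUCb G) :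
    (∑ i ∈ s, h i) ∈ RUCb G ∧ m (∑ i ∈ s, h i) = ∑ i ∈ s, m (h i) := by
  classical
  induction s using Finset.induction_on with
  | empty =>
      simp only [Finset.sum_empty]
      exact ⟨rucb_const 0, mean_zero hm⟩
  | @insert a s ha ih =>
      have hha := hh a (Finset.mem_insert_self a s)
      have hrest : ∀ i ∈ s, h i ∈ RUCb G := fun i hi => hh i (Finset.mem_insert_of_mem hi)
      obtain ⟨h1, h2⟩ := ih hrest
      rw [Finset.sum_insert ha, Finset.sum_insert ha]
      exact ⟨rucb_add hha h1, by rw [hm.2.1 _ hha _ h1, h2]⟩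

end Aux

/-- Every bounded action of an amenable Hausdorff topological group by affine homeomorphisms
on a nonempty bounded convex subset of a locally convex space has approximate fixed points. -/
theorem stmt_12 (G : Type*) [Group G] [TopologicalSpace G] [IsTopologicalGroup G] [T2Space G]
    (hG : TopAmenable G)
    (X : Type*) [AddCommGroup X] [Module ℝ X] [TopologicalSpace X]
    [IsTopologicalAddGroup X] [ContinuousSMul ℝ X] [LocallyConvexSpace ℝ X]
    (C : Set X) (hCne : C.Nonempty) (hConv : Convex ℝ C)
    (hCbdd : Bornology.IsVonNBounded ℝ C)
    (ρ : G → X → X)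
    (hmaps : ∀ g : G, Set.MapsTo (ρ g) C C)
    (hone : ∀ x ∈ C, ρ 1 x = x)
    (hmul : ∀ g h : G, ∀ x ∈ C, ρ (g * h) x = ρ g (ρ h x))
    (hcont : ∀ g : G, ContinuousOn (ρ g) C)
    (haff : ∀ g : G, ∀ x ∈ C, ∀ y ∈ C, ∀ t : ℝ, 0 ≤ t → t ≤ 1 →
      ρ g (t • x + (1 - t) • y) = t • ρ g x + (1 - t) • ρ g y)
    (hbdd : ∀ N ∈ nhds (0 : X), ∃ U ∈ nhds (1 : G), ∀ g ∈ U, ∀ x ∈ C, ρ g x - x ∈ N) :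
    ∃ l : Filter X, l.NeBot ∧ l ≤ Filter.principal C ∧
      ∀ g : G, Filter.Tendsto (fun x => x - ρ g x) l (nhds (0 : X)) := by
  classical
  obtain ⟨m, hm, hinv⟩ := hG
  obtain ⟨x₀, hx₀⟩ := hCne
  -- orbit functions are in RUCb
  have horb : ∀ ψ : X →L[ℝ] ℝ, (fun a : G => ψ (ρ a x₀)) ∈ RUCb G := by
    intro ψ
    constructor
    · have hb : Bornology.IsVonNBounded ℝ (ψ '' C) := hCbdd.image ψ
      rw [NormedSpace.isVonNBounded_iff] at hb
      obtain ⟨B, hB⟩ := isBounded_iff_forall_norm_le.mp hb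
      exact ⟨B, fun a => by
        have := hB _ (Set.mem_image_of_mem ψ (hmaps a hx₀))
        simpa [Real.norm_eq_abs] using this⟩
    · intro ε hε
      have hN : ψ ⁻¹' Metric.closedBall 0 ε ∈ nhds (0 : X) := by
        apply ψ.continuous.continuousAt.preimage_mem_nhds
        rw [map_zero]
        exact Metric.closedBall_mem_nhds (0:ℝ) hε
      obtain ⟨U, hU, hU2⟩ := hbdd _ hN
      refine ⟨U, hU, fun x y hxy => ?_⟩
      have hy : ρ y x₀ ∈ C := hmaps y hx₀
      have hx : ρ x x₀ = ρ (x * y⁻¹) (ρ y x₀) := by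
        rw [← hmul _ _ _ hx₀, inv_mul_cancel_right]
      have hmem := hU2 _ hxy _ hy
      rw [Set.mem_preimage, Metric.mem_closedBall, Real.dist_0_eq_abs] at hmem
      calc |ψ (ρ x x₀) - ψ (ρ y x₀)| = |ψ (ρ (x * y⁻¹) (ρ y x₀) - ρ y x₀)| := by
            rw [hx, map_sub]
      _ ≤ ε := hmem
  -- the key approximate fixed point property for finitely many group elements
  have key : ∀ F : Set G, F.Finite → ∀ N ∈ nhds (0 : X),
      ∃ x ∈ C, ∀ g ∈ F, x - ρ g x ∈ N := by
    intro F hF N hN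
    by_contra hcon
    push_neg at hcon
    haveI := hF.fintype
    set ι := ↥F
    let A : X → (ι → X) := fun x => fun g => x - ρ g.1 x
    let D := A '' C
    have hDconv : Convex ℝ D := by
      rintro _ ⟨x, hx, rfl⟩ _ ⟨y, hy, rfl⟩ s t hs ht hst
      refine ⟨s • x + t • y, ?_, ?_⟩
      · exact hConv hx hy hs ht hst
      · obtain rfl : t = 1 - s := by linarith
        funext g
        simp only [A, Pi.add_apply, Pi.smul_apply]
        rw [haff g.1 x hx y hy s hs (by linarith)]
        module
    have h0 : (0 : ι → X) ∉ closure D := by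
      intro h0
      have hV : (Set.pi Set.univ fun _ : ι => N) ∈ nhds (0 : ι → X) :=
        set_pi_mem_nhds Set.finite_univ (fun i _ => by simpa using hN)
      obtain ⟨v, hv1, hv2⟩ := mem_closure_iff_nhds.mp h0 _ hV
      obtain ⟨x, hx, rfl⟩ := hv2
      obtain ⟨g, hgF, hgN⟩ := hcon x hx
      exact hgN (hv1 ⟨g, hgF⟩ (Set.mem_univ _))
    obtain ⟨Φ, u, hΦD, hΦ0⟩ :=
      geometric_hahn_banach_closed_point hDconv.closure isClosed_closure h0
    have hu0 : u < 0 := by simpa using hΦ0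
    -- decompose Φ into coordinates
    have hsing_cont : ∀ i : ι, Continuous fun x : X => (Pi.single i x : ι → X) := by
      intro i
      apply continuous_pi
      intro j
      by_cases h : j = i
      · subst h; simpa only [Pi.single_eq_same] using continuous_id'
      · simp only [Pi.single_eq_of_ne h]; exact continuous_const
    let φ : ι → (X →L[ℝ] ℝ) := fun i =>
      Φ.comp ⟨LinearMap.single ℝ (fun _ : ι => X) i, hsing_cont i⟩
    have hdecomp : ∀ v : ι → X, Φ v = ∑ i : ι, φ i (v i) := by
      intro v
      conv_lhs => rw [← Finset.univ_sum_single v]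
      rw [map_sum]
      rfl
    let f : ι → G → ℝ := fun i a => φ i (ρ a x₀)
    have hf : ∀ i, f i ∈ RUCb G := fun i => horb (φ i)
    have hf' : ∀ i : ι, (fun a => f i (i.1 * a)) ∈ RUCb G := fun i => rucb_translate (hf i) i.1
    let h : ι → G → ℝ := fun i => f i + (-1 : ℝ) • (fun a => f i (i.1 * a))
    have hhmem : ∀ i, h i ∈ RUCb G := fun i => rucb_add (hf i) (rucb_smul _ (hf' i))
    have hmh : ∀ i, m (h i) = 0 := by
      intro i
      have e1 : m (h i) = m (f i) + m ((-1:ℝ) • (fun a => f i (i.1 * a))) :=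
        hm.2.1 _ (hf i) _ (rucb_smul _ (hf' i))
      have e2 : m ((-1:ℝ) • (fun a => f i (i.1 * a))) = -1 * m (fun a => f i (i.1 * a)) :=
        hm.2.2.1 (-1) _ (hf' i)
      have e3 : m (fun a => f i (i.1 * a)) = m (f i) := hinv (f i) (hf i) i.1
      rw [e1, e2, e3]; ring
    obtain ⟨hHmem, hHsum⟩ := mean_sum hm Finset.univ h (fun i _ => hhmem i)
    have hmH : m (∑ i : ι, h i) = 0 := by
      rw [hHsum]
      simp [hmh]
    have hpt : ∀ a : G, (∑ i : ι, h i) a ≤ u := by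
      intro a
      have hxa : ρ a x₀ ∈ C := hmaps a hx₀
      have hDa : A (ρ a x₀) ∈ D := ⟨_, hxa, rfl⟩
      have hlt := hΦD _ (subset_closure hDa)
      have e : (∑ i : ι, h i) a = Φ (A (ρ a x₀)) := by
        rw [hdecomp, Finset.sum_apply]
        apply Finset.sum_congr rfl
        intro i _
        simp only [h, f, A, Pi.add_apply, Pi.smul_apply, smul_eq_mul]
        rw [map_sub, hmul i.1 a x₀ hx₀]
        ring
      rw [e]
      exact hlt.le
    have hQmem : ((fun _ : G => u) + (-1:ℝ) • (∑ i : ι, h i)) ∈ RUCb G :=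
      rucb_add (rucb_const u) (rucb_smul _ hHmem)
    have hQ0 : ∀ a, 0 ≤ ((fun _ : G => u) + (-1:ℝ) • (∑ i : ι, h i)) a := by
      intro a
      have := hpt a
      simp only [Pi.add_apply, Pi.smul_apply, smul_eq_mul]
      linarith
    have hpos := hm.2.2.2 _ hQmem hQ0
    have hval : m ((fun _ : G => u) + (-1:ℝ) • (∑ i : ι, h i)) = u := by
      rw [hm.2.1 _ (rucb_const u) _ (rucb_smul _ hHmem), hm.2.2.1 (-1) _ hHmem, hmH]
      have hcu : m (fun _ : G => u) = u := by
        have h1 : (fun _ : G => u) = u • (fun _ : G => (1:ℝ)) := by funext a; simp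
        rw [h1, hm.2.2.1 u _ (rucb_const 1), hm.1]; ring
      rw [hcu]; ring
    linarith [hval ▸ hpos]
  -- construct the filter
  refine ⟨Filter.principal C ⊓ ⨅ g : G, Filter.comap (fun x => x - ρ g x) (nhds 0),
    ?_, inf_le_left, ?_⟩
  · rw [← Filter.forall_mem_nonempty_iff_neBot]
    intro s hs
    rw [Filter.mem_inf_iff] at hs
    obtain ⟨t₁, ht₁, t₂, ht₂, rfl⟩ := hs
    rw [Filter.mem_iInf] at ht₂
    obtain ⟨I, hIfin, V, hV, rfl⟩ := ht₂
    choose W hW hWsub using fun i : I => Filter.mem_comap.mp (hV i)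
    haveI : Finite ↥I := hIfin.to_subtype
    have hNmem : (⋂ i : I, W i) ∈ nhds (0 : X) := Filter.iInter_mem.mpr hW
    obtain ⟨x, hxC, hx⟩ := key I hIfin _ hNmem
    refine ⟨x, Filter.mem_principal.mp ht₁ hxC, ?_⟩
    rw [Set.mem_iInter]
    intro i
    exact hWsub i (Set.mem_iInter.mp (hx i.1 i.2) i)
  · intro g
    rw [Filter.tendsto_iff_comap]
    exact inf_le_right.trans (iInf_le _ g)
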